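/- Let q be a prime power, n = 2, u ∈ μ_{q+1} \ F_q, and define η : PG(1,q) → μ_{q+1} by η(x_0 : x_1) = (x_0 + x_1 u)^{q-1}. Then η is a bijection, and its inverse satisfies η^{-1}(1) = (1 : 0) and η^{-1}(x) = ((-u x + u^q)/(x - 1) : 1) for x ∈ μ_{q+1} \ {1}. -/

import Mathlib

open Polynomial in
lemma aux_fixed (K L : Type*) [Field K] [Fintype K] [Field L] [Fintype L] [Algebra K L]
    (x : L) (hx : x ^ (Fintype.card K) = x) : x ∈ Set.range (algebraMap K L) := by
  classical
  set q := Fintype.card K with hq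
  have hq2 : 1 < q := Fintype.one_lt_card
  set P : L[X] := X ^ q - X with hP
  have hPne : P ≠ 0 := FiniteField.X_pow_card_sub_X_ne_zero L hq2
  have hPdeg : P.natDegree = q := FiniteField.X_pow_card_sub_X_natDegree_eq L hq2
  set T : Finset L := Finset.univ.image (algebraMap K L) with hT
  have hTsub : T ⊆ P.roots.toFinset := by
    intro y hy
    simp only [hT, Finset.mem_image] at hy
    obtain ⟨k, -, rfl⟩ := hy
    rw [Multiset.mem_toFinset, mem_roots hPne]
    simp [hP, IsRoot, ← map_pow]
    rw [FiniteField.pow_card, sub_self]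
  have hTcard : T.card = q := by
    rw [hT, Finset.card_image_of_injective _ (algebraMap K L).injective, Finset.card_univ]
  by_contra hxT
  have hxmem : x ∈ P.roots.toFinset := by
    rw [Multiset.mem_toFinset, mem_roots hPne]
    simp [hP, IsRoot, hx]
  have hxT' : x ∉ T := by
    intro h
    simp only [hT, Finset.mem_image] at h
    obtain ⟨k, -, hk⟩ := h
    exact hxT ⟨k, hk⟩
  have : q + 1 ≤ P.roots.toFinset.card := by
    have := Finset.card_le_card (Finset.insert_subset hxmem hTsub)
    rwa [Finset.card_insert_of_notMem hxT', hTcard] at this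
  have h2 : P.roots.toFinset.card ≤ q := by
    calc P.roots.toFinset.card ≤ Multiset.card P.roots := P.roots.toFinset_card_le
    _ ≤ P.natDegree := P.card_roots'
    _ = q := hPdeg
  omega

theorem stmt18 (K L : Type*) [Field K] [Fintype K] [Field L] [Fintype L] [Algebra K L]
    (hd : Module.finrank K L = 2)
    (u : L) (hu1 : u ^ (Fintype.card K + 1) = 1) (hu2 : u ∉ Set.range (algebraMap K L)) :
    ∃ η : Projectivization K (Fin 2 → K) → L,
      (∀ (v : Fin 2 → K) (hv : v ≠ 0),
        η (Projectivization.mk K v hv) =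
          (algebraMap K L (v 0) + algebraMap K L (v 1) * u) ^ (Fintype.card K - 1)) ∧
      Function.Injective η ∧
      Set.range η = {x : L | x ≠ 0 ∧ x ^ (Fintype.card K + 1) = 1} ∧
      η (Projectivization.mk K ![1, 0] (by
        intro h; exact one_ne_zero (congrFun h 0))) = 1 ∧
      (∀ x : L, x ≠ 0 → x ^ (Fintype.card K + 1) = 1 → x ≠ 1 →
        ∃ c : K, algebraMap K L c = (-u * x + u ^ Fintype.card K) / (x - 1) ∧
          η (Projectivization.mk K ![c, 1] (by
            intro h; exact one_ne_zero (congrFun h 1))) = x) := by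
  set q := Fintype.card K with hq
  have hq2 : 1 < q := Fintype.one_lt_card
  have hcardL : Fintype.card L = q ^ 2 := by
    rw [Module.card_eq_pow_finrank (K := K) (V := L), hd]
  have hu0 : u ≠ 0 := by
    rintro rfl; simp at hu1
  -- linear independence of 1, u
  have key3 : ∀ a b : K, algebraMap K L a + algebraMap K L b * u = 0 → a = 0 ∧ b = 0 := by
    intro a b hab
    by_cases hb : b = 0
    · subst hb; simp at hab
      exact ⟨(algebraMap K L).injective (by simpa using hab), rfl⟩
    · exfalso
      apply hu2
      refine ⟨-a / b, ?_⟩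
      have hbL : algebraMap K L b ≠ 0 := by
        simpa using (algebraMap K L).injective.ne hb
      rw [map_div₀, map_neg, div_eq_iff hbL]
      linear_combination -hab
  -- the defining function
  set f : (Fin 2 → K) → L := fun v => algebraMap K L (v 0) + algebraMap K L (v 1) * u with hfdef
  have hf0 : ∀ v : Fin 2 → K, v ≠ 0 → f v ≠ 0 := by
    intro v hv hvf
    obtain ⟨h0, h1⟩ := key3 _ _ hvf
    apply hv
    funext i
    fin_cases i <;> simpa
  have hfsmul : ∀ (t : K) (v : Fin 2 → K), f (t • v) = algebraMap K L t * f v := by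
    intro t v
    simp only [hfdef, Pi.smul_apply, smul_eq_mul, map_mul]
    ring
  -- membership in K from q-th power fixed / (q-1)-st power one
  have key2 : ∀ w : L, w ≠ 0 → w ^ (q - 1) = 1 → w ∈ Set.range (algebraMap K L) := by
    intro w hw hw1
    apply aux_fixed K L
    have : w ^ q = w ^ (q - 1) * w := by
      rw [← pow_succ]
      congr 1
      omega
    rw [this, hw1, one_mul]
  -- the map η
  set η : Projectivization K (Fin 2 → K) → L :=
    Projectivization.lift (fun v => (f v.1) ^ (q - 1)) (by
      rintro ⟨a, ha⟩ ⟨b, hb⟩ t (rfl : a = t • b)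
      simp only
      have ht : t ≠ 0 := by rintro rfl; simp at ha
      rw [hfsmul, mul_pow, ← map_pow, FiniteField.pow_card_sub_one_eq_one t ht, map_one, one_mul])
    with hηdef
  have hηmk : ∀ (v : Fin 2 → K) (hv : v ≠ 0),
      η (Projectivization.mk K v hv) = (f v) ^ (q - 1) := fun v hv => rfl
  -- injectivity
  have hinj : Function.Injective η := by
    intro x y
    induction x using Projectivization.ind with | h v hv =>
    induction y using Projectivization.ind with | h w hw =>
    intro hxy
    rw [hηmk, hηmk] at hxy
    have hfv := hf0 v hv
    have hfw := hf0 w hw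
    have hdiv : (f v / f w) ^ (q - 1) = 1 := by
      rw [div_pow, hxy, div_self (pow_ne_zero _ hfw)]
    obtain ⟨t, ht⟩ := key2 _ (div_ne_zero hfv hfw) hdiv
    have ht0 : t ≠ 0 := by
      rintro rfl
      rw [map_zero] at ht
      exact (div_ne_zero hfv hfw) ht.symm
    have hft : f v = f (t • w) := by
      rw [hfsmul, ht]
      field_simp
    have hcomp : v 0 = t * w 0 ∧ v 1 = t * w 1 := by
      have hz := key3 (v 0 - t * w 0) (v 1 - t * w 1) (by
        rw [map_sub, map_sub]
        have := hft
        simp only [hfdef, Pi.smul_apply, smul_eq_mul, map_mul] at this ⊢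
        linear_combination this)
      exact ⟨sub_eq_zero.mp hz.1, sub_eq_zero.mp hz.2⟩
    rw [Projectivization.mk_eq_mk_iff]
    refine ⟨Units.mk0 t ht0, ?_⟩
    funext i
    fin_cases i <;> simp [hcomp.1.symm, hcomp.2.symm]
  -- value at (1:0)
  have h4 : η (Projectivization.mk K ![1, 0] (by
      intro h; exact one_ne_zero (congrFun h 0))) = 1 := by
    rw [hηmk]
    simp [hfdef]
  -- Frobenius
  obtain ⟨p, hp⟩ := CharP.exists K
  haveI := hp
  have hpprime : p.Prime := by
    haveI : Fact (Fintype.card K = q) := ⟨rfl⟩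
    exact CharP.char_is_prime K p
  haveI : Fact p.Prime := ⟨hpprime⟩
  haveI : CharP L p := charP_of_injective_algebraMap (algebraMap K L).injective p
  obtain ⟨n, -, hn⟩ := FiniteField.card K p
  have hφ : ∀ x : L, (iterateFrobenius L p n) x = x ^ q := by
    intro x
    rw [iterateFrobenius_def, ← hn]
  set φ := iterateFrobenius L p (n : ℕ) with hφdef
  -- basic root-of-unity facts
  have hxinv : ∀ x : L, x ^ (q + 1) = 1 → x ^ q = x⁻¹ := by
    intro x hx
    have hx0 : x ≠ 0 := by rintro rfl; simp at hx
    field_simp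
    rw [← pow_succ, hx]
  have huinv : u ^ q = u⁻¹ := hxinv u hu1
  have huu : u⁻¹ - u ≠ 0 := by
    intro h
    have : u * u = 1 := by
      have := sub_eq_zero.mp h
      field_simp at this
      linear_combination -this
    -- u^2 = 1 means u = 1 or u = -1, both in range
    have h2 : (u - 1) * (u + 1) = 0 := by ring_nf; linear_combination this
    rcases mul_eq_zero.mp h2 with h | h
    · exact hu2 ⟨1, by rw [map_one]; linear_combination -h⟩
    · exact hu2 ⟨-1, by rw [map_neg, map_one]; linear_combination -h⟩
  -- point 5
  have h5 : ∀ x : L, x ≠ 0 → x ^ (q + 1) = 1 → x ≠ 1 →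
      ∃ c : K, algebraMap K L c = (-u * x + u ^ q) / (x - 1) ∧
        η (Projectivization.mk K ![c, 1] (by
          intro h; exact one_ne_zero (congrFun h 1))) = x := by
    intro x hx0 hx1 hxne
    have hxq : x ^ q = x⁻¹ := hxinv x hx1
    have hx1' : x - 1 ≠ 0 := sub_ne_zero.mpr hxne
    have hxi1 : x⁻¹ - 1 ≠ 0 := by
      intro h
      have := sub_eq_zero.mp h
      apply hxne
      field_simp at this
      exact this.symm
    set cL : L := (-u * x + u⁻¹) / (x - 1) with hcL
    have hcLq : cL ^ q = cL := by
      have h1 : cL ^ q = (-u⁻¹ * x⁻¹ + u) / (x⁻¹ - 1) := by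
        rw [← hφ, hcL, map_div₀, map_add, map_mul, map_neg, map_inv₀, map_sub, map_one]
        simp only [hφ]
        rw [hxq, huinv, inv_inv]
      rw [h1, hcL, div_eq_div_iff hxi1 hx1']
      field_simp
      ring
    obtain ⟨c, hc⟩ := aux_fixed K L cL hcLq
    refine ⟨c, ?_, ?_⟩
    · rw [hc, huinv, hcL]
    · rw [hηmk]
      have hval : f ![c, 1] = (u⁻¹ - u) / (x - 1) := by
        simp only [hfdef, Matrix.cons_val_zero, Matrix.cons_val_one, Matrix.head_cons, map_one,
          one_mul, hc, hcL]
        field_simp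
        ring
      rw [hval]
      set w : L := (u⁻¹ - u) / (x - 1) with hw
      have hw0 : w ≠ 0 := div_ne_zero huu hx1'
      have hwq : w ^ q = (u - u⁻¹) / (x⁻¹ - 1) := by
        rw [← hφ, hw, map_div₀, map_sub, map_sub, map_inv₀, map_one]
        simp only [hφ]
        rw [huinv, hxq, inv_inv]
      rw [pow_sub₀ w hw0 (by omega : 1 ≤ q), pow_one, hwq, hw]
      rw [inv_div, div_mul_div_comm, div_eq_iff (mul_ne_zero hxi1 huu)]
      field_simp
      ring
  -- range
  have hrange : Set.range η = {x : L | x ≠ 0 ∧ x ^ (q + 1) = 1} := by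
    ext x
    constructor
    · rintro ⟨P, rfl⟩
      induction P using Projectivization.ind with | h v hv =>
      rw [hηmk]
      have hfv := hf0 v hv
      refine ⟨pow_ne_zero _ hfv, ?_⟩
      rw [← pow_mul]
      have hqq : (q - 1) * (q + 1) = q ^ 2 - 1 := by
        have h1 : 1 ≤ q := by omega
        have h2 : 1 ≤ q ^ 2 := Nat.one_le_pow _ _ (by omega)
        zify [h1, h2]
        ring
      rw [hqq, ← hcardL]
      exact FiniteField.pow_card_sub_one_eq_one _ hfv
    · rintro ⟨hx0, hx1⟩
      by_cases hx : x = 1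
      · subst hx
        exact ⟨_, h4⟩
      · obtain ⟨c, -, hc2⟩ := h5 x hx0 hx1 hx
        exact ⟨_, hc2⟩
  exact ⟨η, hηmk, hinj, hrange, h4, h5⟩
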